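/- arXiv:2104.13081 — 2 statements merged into one kernel-verified Lean document; each statement's English description precedes it below -/
import Mathlib

section
/- Let g : [0,1]^m → [0,1] be non-decreasing in each argument, and suppose that whenever U_1,...,U_m are independent Uni[0,1] random variables, g(U_1,...,U_m) is stochastically at least Uni[0,1]. Let p_1,...,p_m be jointly independent random variables in [0,1], each stochastically at least Uni[0,1]. Then g(p_1,...,p_m) is stochastically at least Uni[0,1]. -/
open MeasureTheory ProbabilityTheory

open scoped ENNReal
open Set


section Quantile

variable (ρ : Measure ℝ)

noncomputable def Qf (v : ℝ) : ℝ := sInf {s | 0 ≤ s ∧ min v 1 ≤ cdf ρ s}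

variable {ρ}

lemma Qf_bddBelow (v : ℝ) : BddBelow {s | 0 ≤ s ∧ min v 1 ≤ cdf ρ s} :=
  ⟨0, fun _ hs => hs.1⟩

variable (h1 : cdf ρ 1 = 1)
include h1

lemma Qf_nonempty (v : ℝ) : Set.Nonempty {s | 0 ≤ s ∧ min v 1 ≤ cdf ρ s} :=
  ⟨1, zero_le_one, by rw [h1]; exact min_le_right v 1⟩

lemma Qf_mono : Monotone (Qf ρ) := fun v v' hvv' =>
  csInf_le_csInf (Qf_bddBelow v) (Qf_nonempty h1 v')
    (fun s hs => ⟨hs.1, (min_le_min hvv' le_rfl).trans hs.2⟩)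

omit h1 in
lemma Qf_nonneg (v : ℝ) : 0 ≤ Qf ρ v :=
  Real.sInf_nonneg (fun _ hs => hs.1)

omit h1 in
lemma Qf_le_of_le (v s : ℝ) (hs : 0 ≤ s) (h : min v 1 ≤ cdf ρ s) : Qf ρ v ≤ s :=
  csInf_le (Qf_bddBelow v) ⟨hs, h⟩

lemma le_cdf_of_Qf_le (v s : ℝ) (h : Qf ρ v ≤ s) : min v 1 ≤ cdf ρ s := by
  have hA : ∀ x, s < x → min v 1 ≤ cdf ρ x := by
    intro x hx
    obtain ⟨y, hy, hys⟩ := (Real.sInf_le_iff (Qf_bddBelow v) (Qf_nonempty h1 v)).mp h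
      (x - s) (by linarith)
    exact hy.2.trans (monotone_cdf ρ (by linarith))
  have hcont : Filter.Tendsto (cdf ρ) (nhdsWithin s (Set.Ioi s)) (nhds (cdf ρ s)) :=
    ((cdf ρ).right_continuous s).tendsto.mono_left (nhdsWithin_mono s Set.Ioi_subset_Ici_self)
  refine ge_of_tendsto hcont ?_
  filter_upwards [self_mem_nhdsWithin] with x hx using hA x hx

lemma Qf_measurable : Measurable (Qf ρ) := (Qf_mono h1).measurable

variable (hdom : ∀ s ∈ Set.Icc (0:ℝ) 1, cdf ρ s ≤ s)
include hdom

/-- domination: the quantile is at least the uniform -/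
lemma le_Qf (v : ℝ) (hv0 : 0 < v) (hv1 : v ≤ 1) : v ≤ Qf ρ v := by
  refine le_csInf (Qf_nonempty h1 v) (fun s hs => ?_)
  rcases le_or_gt s 1 with h | h
  · have : min v 1 ≤ s := hs.2.trans (hdom s ⟨hs.1, h⟩)
    rwa [min_eq_left hv1] at this
  · linarith

end Quantile

noncomputable def unif : Measure ℝ := volume.restrict (Set.Icc 0 1)

instance : IsProbabilityMeasure unif :=
  ⟨by simp [unif, Real.volume_Icc]⟩

lemma unif_apply (A : Set ℝ) : unif A = volume (A ∩ Set.Icc 0 1) :=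
  Measure.restrict_apply' measurableSet_Icc

lemma unif_Iic (s : ℝ) : unif (Set.Iic s) = ENNReal.ofReal (min s 1) := by
  rw [unif_apply]
  have : Set.Iic s ∩ Set.Icc 0 1 = Set.Icc 0 (min s 1) := by
    ext v; simp only [Set.mem_inter_iff, Set.mem_Iic, Set.mem_Icc, le_min_iff]; tauto
  rw [this, Real.volume_Icc, sub_zero]

lemma unif_map_Qf (ρ : Measure ℝ) [IsProbabilityMeasure ρ] (h1 : cdf ρ 1 = 1)
    (hneg : ∀ s < (0:ℝ), ρ (Set.Iic s) = 0) : unif.map (Qf ρ) = ρ := by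
  refine Measure.ext_of_Iic _ _ (fun s => ?_)
  rw [Measure.map_apply (Qf_measurable h1) measurableSet_Iic]
  have hpre : Qf ρ ⁻¹' Set.Iic s = {v | Qf ρ v ≤ s} := rfl
  rcases lt_or_ge s 0 with hs | hs
  · rw [hneg s hs, hpre]
    have : {v | Qf ρ v ≤ s} = (∅ : Set ℝ) := by
      ext v; simp only [Set.mem_setOf_eq, Set.mem_empty_iff_false, iff_false]
      intro h; exact absurd (le_trans (Qf_nonneg v) h) (not_le.mpr hs)
    rw [this, measure_empty]
  · have hf1 : cdf ρ s ≤ 1 := cdf_le_one ρ s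
    have hf0 : 0 ≤ cdf ρ s := cdf_nonneg ρ s
    rw [hpre, unif_apply, ← ofReal_cdf ρ s]
    refine le_antisymm ?_ ?_
    · have hsub : {v | Qf ρ v ≤ s} ∩ Set.Icc 0 1 ⊆ Set.Icc 0 (cdf ρ s) := by
        intro v hv
        refine Set.mem_Icc.mpr ⟨hv.2.1, ?_⟩
        rcases eq_or_lt_of_le hv.2.1 with h0 | h0
        · rw [← h0]; exact hf0
        · have := le_cdf_of_Qf_le h1 v s hv.1
          rwa [min_eq_left hv.2.2] at this
      calc volume ({v | Qf ρ v ≤ s} ∩ Set.Icc 0 1) ≤ volume (Set.Icc 0 (cdf ρ s)) :=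
            measure_mono hsub
        _ = ENNReal.ofReal (cdf ρ s) := by rw [Real.volume_Icc, sub_zero]
    · have hsub : Set.Ioc 0 (cdf ρ s) ⊆ {v | Qf ρ v ≤ s} ∩ Set.Icc 0 1 := by
        intro v hv
        rcases Set.mem_Ioc.mp hv with ⟨hv0, hvf⟩
        exact ⟨Qf_le_of_le v s hs (le_trans (min_le_left v 1) hvf), hv0.le, hvf.trans hf1⟩
      calc ENNReal.ofReal (cdf ρ s) = volume (Set.Ioc 0 (cdf ρ s)) := by
            rw [Real.volume_Ioc, sub_zero]
        _ ≤ volume ({v | Qf ρ v ≤ s} ∩ Set.Icc 0 1) := measure_mono hsub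

section PiStuff

variable {m : ℕ}

noncomputable def nu (m : ℕ) : Measure (Fin m → ℝ) := Measure.pi (fun _ => unif)

instance : IsProbabilityMeasure (nu m) := by unfold nu; infer_instance

lemma nu_eval_preimage (i : Fin m) {B : Set ℝ} (hB : MeasurableSet B) :
    nu m (Function.eval i ⁻¹' B) = unif B := by
  rw [nu, ← Set.univ_pi_update_univ, Measure.pi_pi]
  refine (Finset.prod_eq_single i (fun j _ hj => ?_) (by simp)).trans (by simp)
  rw [Function.update_of_ne hj]
  simp

lemma nu_coords_iIndep :
    iIndepFun (fun (i : Fin m) (u : Fin m → ℝ) => u i) (nu m) := by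
  classical
  rw [iIndepFun_iff_measure_inter_preimage_eq_mul]
  intro S sets hsets
  have h1 : (⋂ i ∈ S, (fun (u : Fin m → ℝ) => u i) ⁻¹' sets i)
      = Set.pi Set.univ (fun i => if i ∈ S then sets i else Set.univ) := by
    ext u
    simp only [Set.mem_iInter, Set.mem_preimage, Set.mem_pi, Set.mem_univ, true_implies]
    constructor
    · intro h i
      by_cases hi : i ∈ S <;> simp [hi, h]
    · intro h i hi
      have := h i; rwa [if_pos hi] at this
  have h2 : ∀ i ∈ S, (nu m) ((fun (u : Fin m → ℝ) => u i) ⁻¹' sets i) = unif (sets i) :=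
    fun i hi => nu_eval_preimage i (hsets i hi)
  calc nu m (⋂ i ∈ S, (fun (u : Fin m → ℝ) => u i) ⁻¹' sets i)
      = ∏ i, unif (if i ∈ S then sets i else Set.univ) := by rw [h1, nu, Measure.pi_pi]
    _ = ∏ i ∈ S, unif (sets i) := by
        refine (Finset.prod_subset (Finset.subset_univ S) (fun i _ hi => by simp [hi])).symm.trans ?_
        exact Finset.prod_congr rfl (fun i hi => by rw [if_pos hi])
    _ = ∏ i ∈ S, (nu m) ((fun (u : Fin m → ℝ) => u i) ⁻¹' sets i) :=
        (Finset.prod_congr rfl h2).symm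

end PiStuff

lemma map_joint_eq_pi {m : ℕ} {Ω : Type} [MeasurableSpace Ω] (μ : Measure Ω)
    [IsProbabilityMeasure μ] (f : Fin m → Ω → ℝ) (hf : ∀ i, Measurable (f i))
    (hindep : iIndepFun f μ) :
    μ.map (fun ω i => f i ω) = Measure.pi (fun i => μ.map (f i)) := by
  have : ∀ i, IsProbabilityMeasure (μ.map (f i)) :=
    fun i => Measure.isProbabilityMeasure_map (hf i).aemeasurable
  refine (Measure.pi_eq (fun s hs => ?_)).symm
  have hmeas : Measurable (fun ω i => f i ω) := measurable_pi_lambda _ hf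
  rw [Measure.map_apply hmeas (MeasurableSet.univ_pi hs)]
  have hpre : (fun ω i => f i ω) ⁻¹' (Set.pi Set.univ s) = ⋂ i, f i ⁻¹' s i := by
    ext ω; simp [Set.mem_pi]
  rw [hpre, hindep.meas_iInter (fun i => ⟨s i, hs i, rfl⟩)]
  exact Finset.prod_congr rfl (fun i _ => (Measure.map_apply (hf i) (hs i)).symm)

section Closure

variable {m : ℕ} {g : (Fin m → ℝ) → ℝ} {t : ℝ}
variable (hmono : ∀ x y : Fin m → ℝ, (∀ i, x i ≤ y i) → g x ≤ g y)
include hmono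

lemma closure_lower {x y : Fin m → ℝ} (hx : x ∈ closure {z | g z ≤ t})
    (hyx : ∀ i, y i ≤ x i) : y ∈ closure {z | g z ≤ t} := by
  obtain ⟨z, hz, hzx⟩ := mem_closure_iff_seq_limit.mp hx
  have heq : (fun i => min (x i) (y i)) = y := funext (fun i => min_eq_right (hyx i))
  have htend' : Filter.Tendsto (fun n => fun i => min (z n i) (y i)) Filter.atTop
      (nhds (fun i => min (x i) (y i))) := by
    rw [tendsto_pi_nhds]
    intro i
    show Filter.Tendsto (fun n => min (z n i) (y i)) Filter.atTop (nhds (min (x i) (y i)))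
    exact Filter.Tendsto.min
      (((continuous_apply i).continuousAt.tendsto).comp hzx) tendsto_const_nhds
  have htend := heq ▸ htend'
  exact mem_closure_of_tendsto htend (Filter.Eventually.of_forall
    (fun n => le_trans (hmono _ _ (fun i => min_le_left _ _)) (hz n)))

lemma closure_shift {x : Fin m → ℝ} (hx : x ∈ closure {z | g z ≤ t}) {ε : ℝ} (hε : 0 < ε) :
    g (fun i => x i - ε) ≤ t := by
  obtain ⟨z, hz, hdist⟩ := Metric.mem_closure_iff.mp hx ε hε
  refine le_trans (hmono _ _ (fun i => ?_)) hz
  have h1 : dist (x i) (z i) ≤ dist x z := dist_le_pi_dist x z i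
  have := abs_lt.mp (lt_of_le_of_lt h1 hdist)
  linarith [this.1, this.2]

end Closure

noncomputable def wrap (ε v : ℝ) : ℝ := if ε ≤ v then v - ε else v + (1 - ε)

lemma wrap_measurable (ε : ℝ) : Measurable (wrap ε) := by
  unfold wrap
  exact Measurable.ite (measurableSet_le measurable_const measurable_id)
    (measurable_id.sub measurable_const) (measurable_id.add measurable_const)

lemma unif_wrap (ε : ℝ) (hε0 : 0 < ε) (hε1 : ε < 1) (s : ℝ) (hs0 : 0 ≤ s) (hs1 : s ≤ 1) :
    unif {v | wrap ε v ≤ s} = ENNReal.ofReal s := by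
  set A := {v | wrap ε v ≤ s} with hA
  have key := measure_inter_add_diff (μ := unif) A (measurableSet_Ici (a := ε))
  have h1 : A ∩ Set.Ici ε = Set.Icc ε (s + ε) := by
    ext v
    simp only [hA, Set.mem_inter_iff, Set.mem_setOf_eq, Set.mem_Ici, Set.mem_Icc, wrap]
    constructor
    · rintro ⟨hw, hv⟩; rw [if_pos hv] at hw; exact ⟨hv, by linarith⟩
    · rintro ⟨hv, hvs⟩; rw [if_pos hv]; exact ⟨by linarith, hv⟩
  have h2 : A \ Set.Ici ε = Set.Iio ε ∩ Set.Iic (s - 1 + ε) := by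
    ext v
    simp only [hA, Set.mem_diff, Set.mem_setOf_eq, Set.mem_Ici, Set.mem_inter_iff, Set.mem_Iio,
      Set.mem_Iic, not_le, wrap]
    constructor
    · rintro ⟨hw, hv⟩; rw [if_neg (not_le.mpr hv)] at hw; exact ⟨hv, by linarith⟩
    · rintro ⟨hv, hvs⟩; rw [if_neg (not_le.mpr hv)]; exact ⟨by linarith, hv⟩
  have e1 : unif (A ∩ Set.Ici ε) = ENNReal.ofReal (min (s + ε) 1 - ε) := by
    rw [h1, unif_apply]
    have : Set.Icc ε (s + ε) ∩ Set.Icc 0 1 = Set.Icc ε (min (s + ε) 1) := by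
      ext v
      simp only [Set.mem_inter_iff, Set.mem_Icc, le_min_iff]
      constructor
      · rintro ⟨⟨a, b⟩, c, d⟩; exact ⟨a, b, d⟩
      · rintro ⟨a, b, c⟩; exact ⟨⟨a, b⟩, by linarith, c⟩
    rw [this, Real.volume_Icc]
  have e2 : unif (A \ Set.Ici ε) = ENNReal.ofReal (max (s - 1 + ε) 0) := by
    rw [h2, unif_apply]
    rcases le_or_gt (s - 1 + ε) 0 with hc | hc
    · have hsub : Set.Iio ε ∩ Set.Iic (s - 1 + ε) ∩ Set.Icc 0 1 ⊆ {(0:ℝ)} := by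
        intro v hv
        have h3 := hv.1.2
        have h4 := hv.2.1
        simp only [Set.mem_Iic] at h3
        simp only [Set.mem_singleton_iff]
        linarith [le_antisymm (by linarith : v ≤ 0) h4]
      refine le_antisymm ?_ ?_
      · exact le_trans (measure_mono hsub) (by simp)
      · simp [hc, max_eq_right]
    · have hcε : s - 1 + ε ≤ ε := by linarith
      refine le_antisymm ?_ ?_
      · have hsub : Set.Iio ε ∩ Set.Iic (s - 1 + ε) ∩ Set.Icc 0 1 ⊆ Set.Icc 0 (s - 1 + ε) :=
          fun v hv => ⟨hv.2.1, hv.1.2⟩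
        refine le_trans (measure_mono hsub) ?_
        rw [Real.volume_Icc, sub_zero, max_eq_left hc.le]
      · have hsub : Set.Ico 0 (s - 1 + ε) ⊆ Set.Iio ε ∩ Set.Iic (s - 1 + ε) ∩ Set.Icc 0 1 := by
          intro v hv
          exact ⟨⟨lt_of_lt_of_le hv.2 hcε, hv.2.le⟩, hv.1, by linarith [hv.2]⟩
        refine le_trans (le_of_eq ?_) (measure_mono hsub)
        rw [Real.volume_Ico, sub_zero, max_eq_left hc.le]
  rw [← key, e1, e2]
  rcases le_or_gt (s + ε) 1 with h | h
  · rw [min_eq_left h, max_eq_right (by linarith), ENNReal.ofReal_zero, add_zero]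
    congr 1; ring
  · rw [min_eq_right h.le, max_eq_left (by linarith), ← ENNReal.ofReal_add (by linarith) (by linarith)]
    congr 1; ring

/-- If `g` is coordinatewise non-decreasing and `g` of any independent `Uni[0,1]` family
is stochastically at least `Uni[0,1]`, then `g` of any jointly independent family of
valid p-values is stochastically at least `Uni[0,1]`. -/
theorem stmt7 (m : ℕ) (hm : 0 < m) (g : (Fin m → ℝ) → ℝ)
    (hrange : ∀ x, (∀ i, x i ∈ Set.Icc (0 : ℝ) 1) → g x ∈ Set.Icc (0 : ℝ) 1)
    (hmono : ∀ x y : Fin m → ℝ, (∀ i, x i ≤ y i) → g x ≤ g y)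
    (hgvalid : ∀ (Ω' : Type) (_ : MeasurableSpace Ω') (ν : Measure Ω')
      (_ : IsProbabilityMeasure ν) (V : Fin m → Ω' → ℝ), (∀ i, Measurable (V i)) →
      iIndepFun V ν →
      (∀ i, ∀ t ∈ Set.Icc (0 : ℝ) 1, ν {ω | V i ω ≤ t} = ENNReal.ofReal t) →
      ∀ t ∈ Set.Icc (0 : ℝ) 1, ν {ω | g (fun i => V i ω) ≤ t} ≤ ENNReal.ofReal t)
    {Ω : Type} [MeasurableSpace Ω] (μ : Measure Ω) [IsProbabilityMeasure μ]
    (p : Fin m → Ω → ℝ) (hpm : ∀ i, Measurable (p i))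
    (hprange : ∀ i ω, p i ω ∈ Set.Icc (0 : ℝ) 1)
    (hindep : iIndepFun p μ)
    (hvalid : ∀ i, ∀ t ∈ Set.Icc (0 : ℝ) 1, μ {ω | p i ω ≤ t} ≤ ENNReal.ofReal t) :
    ∀ t ∈ Set.Icc (0 : ℝ) 1, μ {ω | g (fun i => p i ω) ≤ t} ≤ ENNReal.ofReal t := by
  rintro t ⟨ht0, ht1⟩
  set ρ : Fin m → Measure ℝ := fun i => μ.map (p i) with hρ
  have hρprob : ∀ i, IsProbabilityMeasure (ρ i) :=
    fun i => Measure.isProbabilityMeasure_map (hpm i).aemeasurable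
  have hρIic : ∀ i s, ρ i (Set.Iic s) = μ {ω | p i ω ≤ s} :=
    fun i s => Measure.map_apply (hpm i) measurableSet_Iic
  have hneg : ∀ i, ∀ s < (0:ℝ), ρ i (Set.Iic s) = 0 := by
    intro i s hs
    rw [hρIic]
    have : {ω | p i ω ≤ s} = (∅ : Set Ω) := by
      ext ω; simp only [Set.mem_setOf_eq, Set.mem_empty_iff_false, iff_false, not_le]
      exact lt_of_lt_of_le hs (hprange i ω).1
    rw [this, measure_empty]
  have h1 : ∀ i, cdf (ρ i) 1 = 1 := by
    intro i
    have := hρprob i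
    have h := ofReal_cdf (ρ i) 1
    rw [hρIic] at h
    have huniv : {ω | p i ω ≤ 1} = (Set.univ : Set Ω) := by
      ext ω; simp [Set.mem_setOf_eq, (hprange i ω).2]
    rw [huniv, measure_univ] at h
    have h0 := cdf_nonneg (ρ i) 1
    rw [← ENNReal.ofReal_one] at h
    exact (ENNReal.ofReal_eq_ofReal_iff h0 zero_le_one).mp h
  have hdom : ∀ i, ∀ s ∈ Set.Icc (0:ℝ) 1, cdf (ρ i) s ≤ s := by
    intro i s hs
    have := hρprob i
    have h := ofReal_cdf (ρ i) s
    rw [hρIic] at h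
    have hv := hvalid i s hs
    rw [← h] at hv
    exact (ENNReal.ofReal_le_ofReal_iff hs.1).mp hv
  set K := closure {x : Fin m → ℝ | g x ≤ t} with hKdef
  have hK : MeasurableSet K := isClosed_closure.measurableSet
  set X : Fin m → (Fin m → ℝ) → ℝ := fun i u => Qf (ρ i) (u i) with hX
  have hXm : ∀ i, Measurable (X i) :=
    fun i => (Qf_measurable (h1 i)).comp (measurable_pi_apply i)
  have hXindep : iIndepFun X (nu m) :=
    nu_coords_iIndep.comp (fun i => Qf (ρ i)) (fun i => Qf_measurable (h1 i))
  have hevalmap : ∀ i : Fin m, (nu m).map (fun u : Fin m → ℝ => u i) = unif := by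
    intro i
    refine Measure.ext (fun B hB => ?_)
    rw [Measure.map_apply (measurable_pi_apply i) hB]
    exact nu_eval_preimage i hB
  have hXlaw : ∀ i, (nu m).map (X i) = ρ i := by
    intro i
    have := hρprob i
    have hcomp : X i = (Qf (ρ i)) ∘ (fun u : Fin m → ℝ => u i) := rfl
    rw [hcomp, ← Measure.map_map (Qf_measurable (h1 i)) (measurable_pi_apply i), hevalmap i,
      unif_map_Qf _ (h1 i) (hneg i)]
  have hjointX : (nu m).map (fun u i => X i u) = Measure.pi ρ := by
    rw [map_joint_eq_pi (nu m) X hXm hXindep]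
    congr 1
    funext i
    exact hXlaw i
  have hjointp : μ.map (fun ω i => p i ω) = Measure.pi ρ := map_joint_eq_pi μ p hpm hindep
  have step1 : μ {ω | g (fun i => p i ω) ≤ t} ≤ Measure.pi ρ K := by
    calc μ {ω | g (fun i => p i ω) ≤ t} ≤ μ ((fun ω i => p i ω) ⁻¹' K) :=
          measure_mono (fun ω h => subset_closure h)
      _ = Measure.pi ρ K := by
          rw [← hjointp, Measure.map_apply (measurable_pi_lambda _ hpm) hK]
  have step2 : Measure.pi ρ K = nu m ((fun u i => X i u) ⁻¹' K) := by
    rw [← hjointX, Measure.map_apply (measurable_pi_lambda _ hXm) hK]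
  have hEnull : nu m {u : Fin m → ℝ | ¬ ∀ i, u i ∈ Set.Ioc (0:ℝ) 1} = 0 := by
    have hz : ∀ i : Fin m, nu m ((fun u : Fin m → ℝ => u i) ⁻¹' (Set.Ioc (0:ℝ) 1)ᶜ) = 0 := by
      intro i
      rw [nu_eval_preimage i measurableSet_Ioc.compl,
        measure_compl measurableSet_Ioc (measure_ne_top _ _)]
      have : unif (Set.Ioc 0 1) = 1 := by
        rw [unif_apply, Set.inter_eq_self_of_subset_left Set.Ioc_subset_Icc_self,
          Real.volume_Ioc]
        simp
      rw [this, measure_univ, tsub_self]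
    have hcup : {u : Fin m → ℝ | ¬ ∀ i, u i ∈ Set.Ioc (0:ℝ) 1}
        = ⋃ i, (fun u : Fin m → ℝ => u i) ⁻¹' (Set.Ioc (0:ℝ) 1)ᶜ := by
      ext u
      simp only [Set.mem_setOf_eq, not_forall, Set.mem_iUnion, Set.mem_preimage,
        Set.mem_compl_iff]
    rw [hcup]
    refine le_antisymm (le_trans (measure_iUnion_le _) ?_) zero_le
    rw [ENNReal.tsum_eq_zero.mpr hz]
  have step3 : nu m ((fun u i => X i u) ⁻¹' K) ≤ nu m K := by
    have hsub : (fun u i => X i u) ⁻¹' K ⊆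
        K ∪ {u : Fin m → ℝ | ¬ ∀ i, u i ∈ Set.Ioc (0:ℝ) 1} := by
      intro u hu
      by_cases hE : ∀ i, u i ∈ Set.Ioc (0:ℝ) 1
      · left
        refine closure_lower hmono hu (fun i => ?_)
        exact le_Qf (h1 i) (hdom i) (u i) (hE i).1 (hE i).2
      · right; exact hE
    calc nu m ((fun u i => X i u) ⁻¹' K)
        ≤ nu m (K ∪ {u : Fin m → ℝ | ¬ ∀ i, u i ∈ Set.Ioc (0:ℝ) 1}) := measure_mono hsub
      _ ≤ nu m K + nu m {u : Fin m → ℝ | ¬ ∀ i, u i ∈ Set.Ioc (0:ℝ) 1} := measure_union_le _ _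
      _ = nu m K := by rw [hEnull, add_zero]
  have step5 : ∀ ε : ℝ, 0 < ε → ε < 1 →
      nu m K ≤ ENNReal.ofReal t + (m : ℝ≥0∞) * ENNReal.ofReal ε := by
    intro ε hε0 hε1
    set W : Fin m → (Fin m → ℝ) → ℝ := fun i u => wrap ε (u i) with hW
    have hWm : ∀ i, Measurable (W i) :=
      fun i => (wrap_measurable ε).comp (measurable_pi_apply i)
    have hWindep : iIndepFun W (nu m) :=
      nu_coords_iIndep.comp (fun _ => wrap ε) (fun _ => wrap_measurable ε)
    have hWunif : ∀ i, ∀ s ∈ Set.Icc (0:ℝ) 1, nu m {u | W i u ≤ s} = ENNReal.ofReal s := by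
      intro i s hs
      have hpre : {u : Fin m → ℝ | W i u ≤ s}
          = (fun u : Fin m → ℝ => u i) ⁻¹' {v | wrap ε v ≤ s} := rfl
      have hB : MeasurableSet {v : ℝ | wrap ε v ≤ s} :=
        measurableSet_le (wrap_measurable ε) measurable_const
      rw [hpre, nu_eval_preimage i hB, unif_wrap ε hε0 hε1 s hs.1 hs.2]
    have hg := hgvalid (Fin m → ℝ) inferInstance (nu m) inferInstance W hWm hWindep hWunif t
      ⟨ht0, ht1⟩
    have hsub : K ⊆ {u : Fin m → ℝ | g (fun i => W i u) ≤ t}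
        ∪ (⋃ i, (fun u : Fin m → ℝ => u i) ⁻¹' (Set.Icc ε 1)ᶜ) := by
      intro u hu
      by_cases hE : ∀ i, u i ∈ Set.Icc ε 1
      · left
        have hshift := closure_shift hmono hu hε0
        have heq : (fun i => W i u) = (fun i => u i - ε) := by
          funext i
          simp only [hW, wrap, if_pos (hE i).1]
        rw [Set.mem_setOf_eq, heq]
        exact hshift
      · right
        rw [not_forall] at hE
        obtain ⟨i, hi⟩ := hE
        exact Set.mem_iUnion.mpr ⟨i, hi⟩
    have hstrip : ∀ i : Fin m, nu m ((fun u : Fin m → ℝ => u i) ⁻¹' (Set.Icc ε 1)ᶜ)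
        = ENNReal.ofReal ε := by
      intro i
      rw [nu_eval_preimage i measurableSet_Icc.compl,
        measure_compl measurableSet_Icc (measure_ne_top _ _), measure_univ]
      have : unif (Set.Icc ε 1) = ENNReal.ofReal (1 - ε) := by
        rw [unif_apply, Set.inter_eq_self_of_subset_left (Set.Icc_subset_Icc hε0.le le_rfl),
          Real.volume_Icc]
      rw [this, ← ENNReal.ofReal_one, ← ENNReal.ofReal_sub _ (by linarith)]
      congr 1; ring
    calc nu m K ≤ nu m ({u : Fin m → ℝ | g (fun i => W i u) ≤ t}
          ∪ (⋃ i, (fun u : Fin m → ℝ => u i) ⁻¹' (Set.Icc ε 1)ᶜ)) := measure_mono hsub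
      _ ≤ nu m {u : Fin m → ℝ | g (fun i => W i u) ≤ t}
          + nu m (⋃ i, (fun u : Fin m → ℝ => u i) ⁻¹' (Set.Icc ε 1)ᶜ) := measure_union_le _ _
      _ ≤ ENNReal.ofReal t + (m : ℝ≥0∞) * ENNReal.ofReal ε := by
          refine add_le_add hg ?_
          refine le_trans (measure_iUnion_le _) ?_
          simp only [hstrip]
          rw [tsum_fintype, Finset.sum_const, Finset.card_univ, Fintype.card_fin, nsmul_eq_mul]
  have main : ∀ ε : ℝ, 0 < ε → ε < 1 →
      μ {ω | g (fun i => p i ω) ≤ t} ≤ ENNReal.ofReal t + (m : ℝ≥0∞) * ENNReal.ofReal ε :=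
    fun ε hε0 hε1 => step1.trans (step2 ▸ (step3.trans (step5 ε hε0 hε1)))
  refine ENNReal.le_of_forall_pos_le_add (fun δ hδ _ => ?_)
  set ε : ℝ := min (δ / (m + 1)) (1 / 2) with hε
  have hδpos : (0:ℝ) < δ := hδ
  have hε0 : 0 < ε := lt_min (by positivity) (by norm_num)
  have hε1 : ε < 1 := lt_of_le_of_lt (min_le_right _ _) (by norm_num)
  refine le_trans (main ε hε0 hε1) (add_le_add le_rfl ?_)
  have hcast : (m : ℝ≥0∞) * ENNReal.ofReal ε = ENNReal.ofReal (m * ε) := by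
    rw [ENNReal.ofReal_mul (Nat.cast_nonneg m), ENNReal.ofReal_natCast]
  rw [hcast]
  have hle : (m:ℝ) * ε ≤ δ := by
    have h2 : ε ≤ δ / (m + 1) := min_le_left _ _
    have h3 : (m:ℝ) * ε ≤ m * (δ / (m + 1)) :=
      mul_le_mul_of_nonneg_left h2 (Nat.cast_nonneg m)
    have h4 : (m:ℝ) * (δ / (m + 1)) ≤ δ := by
      rw [mul_div_assoc']
      rw [div_le_iff₀ (by positivity)]
      nlinarith [Nat.cast_nonneg (α := ℝ) m]
    linarith
  calc ENNReal.ofReal ((m:ℝ) * ε) ≤ ENNReal.ofReal δ := ENNReal.ofReal_le_ofReal hle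
    _ = (δ : ℝ≥0∞) := ENNReal.ofReal_coe_nnreal
end

section
/- Let e_1,...,e_s be nonnegative random variables, at least s-γ+1 of which have expectation at most 1. Let h_0 : [0,∞]^{s-γ+1} → [0,∞] be symmetric, non-decreasing in each argument, and such that h_0 applied to any family of s-γ+1 e-variables (each with expectation ≤ 1) has expectation at most 1. Then h_0(e_{(1)},...,e_{(s-γ+1)}) applied to the s-γ+1 smallest order statistics of e_1,...,e_s has expectation at most 1. -/
open MeasureTheory

lemma order_stat_le {n k : ℕ} (v : Fin n → ENNReal) (g : Fin k → Fin n)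
    (hg : Function.Injective g) (j : Fin k) (hj : (j : ℕ) < n) :
    v (Tuple.sort v ⟨j.1, hj⟩) ≤ (v ∘ g) (Tuple.sort (v ∘ g) j) := by
  set τ := Tuple.sort (v ∘ g)
  set σ := Tuple.sort v
  have hu : Monotone ((v ∘ g) ∘ τ) := Tuple.monotone_sort _
  have hw : Monotone (v ∘ σ) := Tuple.monotone_sort _
  set u : ENNReal := (v ∘ g) (τ j)
  -- the set of indices realizing small values
  set S : Finset (Fin n) := (Finset.Iic j).image (fun i => g (τ i)) with hS
  have hScard : S.card = j.1 + 1 := by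
    have hinj : Function.Injective (fun i => g (τ i)) := fun a b h => τ.injective (hg h)
    rw [hS, Finset.card_image_of_injective _ hinj]
    simp [Nat.card_Iic]
  have hSle : ∀ a ∈ S, v a ≤ u := by
    intro a ha
    rw [hS] at ha
    obtain ⟨i, hi, rfl⟩ := Finset.mem_image.mp ha
    exact hu (Finset.mem_Iic.mp hi)
  set S' : Finset (Fin n) := S.image σ.symm with hS'
  have hS'card : S'.card = j.1 + 1 := by
    rw [hS', Finset.card_image_of_injective _ σ.symm.injective, hScard]
  have hex : ∃ p ∈ S', (j : ℕ) ≤ (p : ℕ) := by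
    by_contra h
    push_neg at h
    have : S' ⊆ Finset.univ.filter (fun p : Fin n => (p : ℕ) < j) := by
      intro p hp; simp [h p hp]
    have hle := Finset.card_le_card this
    have : (Finset.univ.filter (fun p : Fin n => (p : ℕ) < j)).card ≤ j := by
      classical
      calc (Finset.univ.filter (fun p : Fin n => (p : ℕ) < j)).card
          ≤ ((Finset.univ.filter (fun p : Fin n => (p : ℕ) < j)).image (Fin.val)).card := by
            rw [Finset.card_image_of_injective _ Fin.val_injective]
        _ ≤ (Finset.range j).card := by
            apply Finset.card_le_card
            intro x hx
            simp only [Finset.mem_image, Finset.mem_filter] at hx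
            obtain ⟨p, ⟨_, hp⟩, rfl⟩ := hx
            simpa using hp
        _ = j := Finset.card_range _
    omega
  obtain ⟨p, hpS', hjp⟩ := hex
  have h1 : v (σ ⟨j.1, hj⟩) ≤ v (σ p) := hw (by exact hjp)
  obtain ⟨a, ha, rfl⟩ := Finset.mem_image.mp hpS'
  calc v (σ ⟨j.1, hj⟩) ≤ v (σ (σ.symm a)) := h1
    _ = v a := by simp
    _ ≤ u := hSle a ha


/-- Partial conjunction for e-values: if at least `s - γ + 1` of the nonnegative random
variables `e_1, …, e_s` have expectation at most `1`, and `h₀` is a symmetric,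
coordinatewise non-decreasing combination function such that `h₀` applied to any family
of `s - γ + 1` e-variables has expectation at most `1`, then `h₀` applied to the
`s - γ + 1` smallest order statistics of `e_1, …, e_s` has expectation at most `1`. -/
theorem stmt12 {Ω : Type} [MeasurableSpace Ω] (μ : Measure Ω) [IsProbabilityMeasure μ]
    (s γ : ℕ) (hγ1 : 1 ≤ γ) (hγs : γ ≤ s)
    (e : Fin s → Ω → ENNReal) (hem : ∀ i, Measurable (e i))
    (hvalid : ∃ T : Finset (Fin s), s - γ + 1 ≤ T.card ∧
      ∀ i ∈ T, ∫⁻ ω, e i ω ∂μ ≤ 1)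
    (h₀ : (Fin (s - γ + 1) → ENNReal) → ENNReal)
    (hsymm : ∀ (σ : Equiv.Perm (Fin (s - γ + 1))) (x : Fin (s - γ + 1) → ENNReal),
      h₀ (x ∘ σ) = h₀ x)
    (hmono : ∀ x y : Fin (s - γ + 1) → ENNReal, (∀ j, x j ≤ y j) → h₀ x ≤ h₀ y)
    (hvalid₀ : ∀ (Ω' : Type) (_ : MeasurableSpace Ω') (ν : Measure Ω')
      (_ : IsProbabilityMeasure ν) (f : Fin (s - γ + 1) → Ω' → ENNReal),
      (∀ j, Measurable (f j)) → (∀ j, ∫⁻ ω, f j ω ∂ν ≤ 1) →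
      ∫⁻ ω, h₀ (fun j => f j ω) ∂ν ≤ 1) :
    ∫⁻ ω, h₀ (fun j =>
        (fun i => e i ω) (Tuple.sort (fun i => e i ω) ⟨j.1, by omega⟩)) ∂μ ≤ 1 := by
  obtain ⟨T, hTcard, hT⟩ := hvalid
  obtain ⟨T', hT'T, hT'card⟩ := Finset.exists_subset_card_eq hTcard
  set ε := T'.equivFinOfCardEq hT'card
  set g : Fin (s - γ + 1) → Fin s := fun j => (ε.symm j : Fin s) with hgdef
  have hginj : Function.Injective g :=
    fun a b h => ε.symm.injective (Subtype.ext h)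
  have key : ∀ ω, h₀ (fun j =>
      (fun i => e i ω) (Tuple.sort (fun i => e i ω) ⟨j.1, by omega⟩)) ≤
      h₀ (fun j => e (g j) ω) := by
    intro ω
    set v : Fin s → ENNReal := fun i => e i ω
    calc h₀ (fun j => v (Tuple.sort v ⟨j.1, by omega⟩))
        ≤ h₀ (fun j => (v ∘ g) (Tuple.sort (v ∘ g) j)) := by
          apply hmono
          intro j
          exact order_stat_le v g hginj j (by omega)
      _ = h₀ (fun j => v (g j)) := hsymm (Tuple.sort (v ∘ g)) (fun j => v (g j))
  calc ∫⁻ ω, h₀ (fun j =>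
        (fun i => e i ω) (Tuple.sort (fun i => e i ω) ⟨j.1, by omega⟩)) ∂μ
      ≤ ∫⁻ ω, h₀ (fun j => e (g j) ω) ∂μ := lintegral_mono key
    _ ≤ 1 := hvalid₀ Ω _ μ inferInstance (fun j => e (g j))
        (fun j => hem (g j)) (fun j => hT (g j) (hT'T (ε.symm j).2))
end
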